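/- Let z M : ℤ with z ≥ 0, and let S_M := {p : ℝ × ℝ | p.1^2 + z*p.1*p.2 + p.2^2 = M}. Then for every α ∈ S_M, the point I₊(α) := (-α.2, α.1 + z*α.2) lies in the connected component of α inside S_M (i.e. I₊(α) ∈ connectedComponentIn S_M α). In other words, multiplication by the imaginary unit i_z preserves each branch of the level set S_M when z ≥ 0. -/
import Mathlib


theorem stmt3 (z M : ℤ) (hz : 0 ≤ z) (α : ℝ × ℝ)
    (hα : α ∈ {p : ℝ × ℝ | p.1 ^ 2 + (z : ℝ) * p.1 * p.2 + p.2 ^ 2 = (M : ℝ)}) :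
    ((-α.2, α.1 + (z : ℝ) * α.2) : ℝ × ℝ) ∈
      connectedComponentIn
        {p : ℝ × ℝ | p.1 ^ 2 + (z : ℝ) * p.1 * p.2 + p.2 ^ 2 = (M : ℝ)} α := by
  set c : ℝ := (z : ℝ) with hc
  have hc0 : 0 ≤ c := by rw [hc]; exact_mod_cast hz
  set S := {p : ℝ × ℝ | p.1 ^ 2 + c * p.1 * p.2 + p.2 ^ 2 = (M : ℝ)} with hS
  -- the "imaginary part" path
  set y : ℝ → ℝ := fun t => (-(c * (1 - t)) + Real.sqrt ((c ^ 2 - 4) * (1 - t) ^ 2 + 4)) / 2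
    with hy
  set γ : ℝ → ℝ × ℝ := fun t =>
    ((1 - t) * α.1 - y t * α.2, (1 - t) * α.2 + y t * α.1 + c * (y t * α.2)) with hγ
  have hcont : Continuous γ := by
    apply Continuous.prodMk <;> fun_prop
  have hmem : ∀ t ∈ Set.Icc (0 : ℝ) 1, γ t ∈ S := by
    intro t ht
    have hrad : 0 ≤ (c ^ 2 - 4) * (1 - t) ^ 2 + 4 := by
      nlinarith [ht.1, ht.2, sq_nonneg (c * (1 - t)), sq_nonneg (1 - t)]
    have hs2 : (Real.sqrt ((c ^ 2 - 4) * (1 - t) ^ 2 + 4)) ^ 2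
        = (c ^ 2 - 4) * (1 - t) ^ 2 + 4 := Real.sq_sqrt hrad
    have hyv : 2 * y t = -(c * (1 - t)) + Real.sqrt ((c ^ 2 - 4) * (1 - t) ^ 2 + 4) := by
      simp [hy]; ring
    have hu : (1 - t) ^ 2 + c * (1 - t) * y t + (y t) ^ 2 = 1 := by
      have h : (2 * y t + c * (1 - t)) ^ 2 = (c ^ 2 - 4) * (1 - t) ^ 2 + 4 := by
        rw [hyv]; ring_nf; ring_nf at hs2; linarith
      nlinarith [h]
    have hα' : α.1 ^ 2 + c * α.1 * α.2 + α.2 ^ 2 = (M : ℝ) := hα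
    show (γ t).1 ^ 2 + c * (γ t).1 * (γ t).2 + (γ t).2 ^ 2 = (M : ℝ)
    simp only [hγ]
    linear_combination (α.1 ^ 2 + c * α.1 * α.2 + α.2 ^ 2) * hu + hα'
  have hpre : IsPreconnected (γ '' Set.Icc 0 1) :=
    (isPreconnected_Icc).image γ hcont.continuousOn
  have hy0 : y 0 = 0 := by
    simp only [hy]
    rw [show (c ^ 2 - 4) * (1 - 0 : ℝ) ^ 2 + 4 = c ^ 2 by ring, Real.sqrt_sq hc0]
    ring
  have hy1 : y 1 = 1 := by
    simp only [hy]
    rw [show (c ^ 2 - 4) * (1 - 1 : ℝ) ^ 2 + 4 = 2 ^ 2 by ring, Real.sqrt_sq (by norm_num)]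
    ring
  have hγ0 : γ 0 = α := by
    simp [hγ, hy0]
  have hγ1 : γ 1 = (-α.2, α.1 + c * α.2) := by
    simp [hγ, hy1]
  have hsub : γ '' Set.Icc 0 1 ⊆ connectedComponentIn S α := by
    apply hpre.subset_connectedComponentIn
    · exact ⟨0, Set.left_mem_Icc.2 zero_le_one, hγ0⟩
    · rintro p ⟨t, ht, rfl⟩; exact hmem t ht
  exact hsub ⟨1, Set.right_mem_Icc.2 zero_le_one, hγ1⟩
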